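/- Let 0 < δ < 1, α ∈ {1−δ, 1}, and let h : [0,∞) → ℝ satisfy h(t) = 1 for 0 ≤ t ≤ α, h(t) = 0 for t ≥ α+δ, with h continuously differentiable on (α, α+δ) of the form h(t) = g((t−α)/δ) where g : [0,1] → [0,1] is C¹ with ∫₀¹ |g'(u)| du = 1. Then for every complex s with Re(s) ≤ 0 and s ≠ 0, the Mellin transform H(s) = ∫₀^∞ h(t) t^{s−1} dt satisfies |H(s)| ≤ (1−δ)^{Re(s)} / |s|. -/

import Mathlib

open MeasureTheory

/-- Bound for the Mellin transform of the smoothing weight h in the half-plane Re(s) ≤ 0,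
interpreted via the integration-by-parts identity H(s) = −(1/s)∫_α^{α+δ} h'(t) t^s dt. -/
theorem mellin_bound_re_nonpos :
    ∀ (δ α : ℝ) (g h : ℝ → ℝ), 0 < δ → δ < 1 → (α = 1 - δ ∨ α = 1) →
      (∀ t : ℝ, 0 ≤ t → t ≤ α → h t = 1) →
      (∀ t : ℝ, α + δ ≤ t → h t = 0) →
      (∀ t : ℝ, α ≤ t → t ≤ α + δ → h t = g ((t - α) / δ)) →
      ContDiffOn ℝ 1 g (Set.Icc 0 1) →
      (∀ u : ℝ, 0 ≤ u → u ≤ 1 → 0 ≤ g u ∧ g u ≤ 1) →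
      (∫ u in (0:ℝ)..1, |deriv g u|) = 1 →
      ∀ s : ℂ, s.re ≤ 0 → s ≠ 0 →
        ‖(-(1 / s) * ∫ t in Set.Icc α (α + δ),
            ((deriv h t : ℝ) : ℂ) * (t : ℂ) ^ s)‖ ≤
          (1 - δ) ^ s.re / ‖s‖ := by
  intro δ α g h hδ hδ1 hα h1 h0 hgh hgC1 hg01 hg' s hs hs0
  set G : ℝ → ℝ := derivWithin g (Set.Icc 0 1) with hGdef
  have h1δ : (0:ℝ) < 1 - δ := by linarith
  have hαlb : 1 - δ ≤ α := by rcases hα with rfl | rfl <;> linarith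
  have hαpos : 0 < α := lt_of_lt_of_le h1δ hαlb
  have hGcont : ContinuousOn G (Set.Icc 0 1) :=
    hgC1.continuousOn_derivWithin (uniqueDiffOn_Icc one_pos) le_rfl
  -- deriv g agrees with G on the open interval
  have hGG : ∀ u ∈ Set.Ioo (0:ℝ) 1, deriv g u = G u := by
    intro u hu
    exact (derivWithin_of_mem_nhds (Icc_mem_nhds hu.1 hu.2)).symm
  have hgd : ∀ u ∈ Set.Ioo (0:ℝ) 1, DifferentiableAt ℝ g u := by
    intro u hu
    exact ((hgC1.differentiableOn one_ne_zero) u (Set.mem_Icc_of_Ioo hu)).differentiableAt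
      (Icc_mem_nhds hu.1 hu.2)
  set φ : ℝ → ℝ := fun t => G ((t - α) / δ) / δ with hφdef
  -- derivative of h on the open interval
  have hderiv : ∀ t ∈ Set.Ioo α (α + δ), deriv h t = φ t := by
    intro t ht
    have hu : (t - α) / δ ∈ Set.Ioo (0:ℝ) 1 := by
      constructor
      · exact div_pos (by linarith [ht.1]) hδ
      · rw [div_lt_one hδ]; linarith [ht.2]
    have heq : h =ᶠ[nhds t] fun x => g ((x - α) / δ) := by
      filter_upwards [Ioo_mem_nhds ht.1 ht.2] with x hx
      exact hgh x hx.1.le hx.2.le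
    rw [heq.deriv_eq]
    have hσ : DifferentiableAt ℝ (fun x : ℝ => (x - α) / δ) t :=
      (differentiable_id.sub_const α).differentiableAt.div_const δ
    have hcomp : deriv (fun x : ℝ => g ((x - α) / δ)) t
        = deriv g ((t - α) / δ) * deriv (fun x : ℝ => (x - α) / δ) t :=
      deriv_comp t (hgd _ hu) hσ
    have hσd : deriv (fun x : ℝ => (x - α) / δ) t = 1 / δ := by
      simp [deriv_div_const, deriv_sub_const]
    rw [hcomp, hσd, hGG _ hu, mul_one_div]
  -- continuity of φ on the closed interval
  have hmaps : ∀ t ∈ Set.Icc α (α + δ), (t - α) / δ ∈ Set.Icc (0:ℝ) 1 := by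
    intro t ht
    constructor
    · exact div_nonneg (by linarith [ht.1]) hδ.le
    · rw [div_le_one hδ]; linarith [ht.2]
  have hφcont : ContinuousOn φ (Set.Icc α (α + δ)) := by
    apply ContinuousOn.div_const
    exact hGcont.comp (((continuous_id.sub continuous_const).div_const δ).continuousOn) hmaps
  -- rewrite the integral using φ
  have hIeq : (∫ t in Set.Icc α (α + δ), ((deriv h t : ℝ) : ℂ) * (t : ℂ) ^ s)
      = ∫ t in Set.Icc α (α + δ), ((φ t : ℝ) : ℂ) * (t : ℂ) ^ s := by
    rw [integral_Icc_eq_integral_Ioc]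
    rw [show (∫ t in Set.Icc α (α + δ), ((φ t : ℝ) : ℂ) * (t : ℂ) ^ s)
        = ∫ t in Set.Ioc α (α + δ), ((φ t : ℝ) : ℂ) * (t : ℂ) ^ s from
      integral_Icc_eq_integral_Ioc]
    have hnull : ∀ᵐ t ∂(volume.restrict (Set.Ioc α (α + δ))),
        ((deriv h t : ℝ) : ℂ) * (t : ℂ) ^ s = ((φ t : ℝ) : ℂ) * (t : ℂ) ^ s := by
      have : ∀ᵐ t : ℝ, t ≠ α + δ := by
        refine (ae_iff.2 ?_)
        simpa using measure_mono_null (fun x hx => by simpa using hx)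
          (measure_singleton (α + δ))
      rw [ae_restrict_iff' measurableSet_Ioc]
      filter_upwards [this] with t ht ht2
      rw [hderiv t ⟨ht2.1, lt_of_le_of_ne ht2.2 ht⟩]
    exact integral_congr_ae hnull
  -- bound the integrand in absolute value
  have habs_bound : ∀ t ∈ Set.Icc α (α + δ),
      ‖((φ t : ℝ) : ℂ) * (t : ℂ) ^ s‖ = |φ t| * t ^ s.re := by
    intro t ht
    have htpos : 0 < t := lt_of_lt_of_le hαpos ht.1
    rw [norm_mul, Complex.norm_real, Real.norm_eq_abs, Complex.norm_cpow_eq_rpow_re_of_pos htpos]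
  -- the total variation integral equals 1
  have hint_phi : (∫ t in Set.Icc α (α + δ), |φ t|) = 1 := by
    rw [integral_Icc_eq_integral_Ioc, ← intervalIntegral.integral_of_le (by linarith : α ≤ α + δ)]
    have h2 : (∫ t in α..(α + δ), |φ t|)
        = ∫ t in (α - α)..(α + δ - α), |G (t / δ) / δ| := by
      rw [← intervalIntegral.integral_comp_sub_right (fun x => |G (x / δ) / δ|) α]
    rw [h2]
    have h3 : (∫ t in (α - α)..(α + δ - α), |G (t / δ) / δ|)
        = ∫ t in (0:ℝ)..δ, |G (t / δ) / δ| := by norm_num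
    rw [h3, intervalIntegral.integral_comp_div (fun x => |G x / δ|) hδ.ne']
    have h4 : (∫ x in (0/δ:ℝ)..(δ/δ), |G x / δ|) = ∫ x in (0:ℝ)..1, |G x| / δ := by
      rw [zero_div, div_self hδ.ne']
      congr 1; funext x; rw [abs_div, abs_of_pos hδ]
    rw [h4, intervalIntegral.integral_div, smul_eq_mul, mul_div_cancel₀ _ hδ.ne']
    have h5 : (∫ x in (0:ℝ)..1, |G x|) = ∫ u in (0:ℝ)..1, |deriv g u| := by
      apply intervalIntegral.integral_congr_ae
      have h1ne : ∀ᵐ x : ℝ, x ≠ (1:ℝ) := by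
        refine (ae_iff.2 ?_)
        simpa using measure_mono_null (fun x hx => by simpa using hx) (measure_singleton (1:ℝ))
      filter_upwards [h1ne] with x hx hmem
      rw [Set.uIoc_of_le (by norm_num : (0:ℝ) ≤ 1)] at hmem
      rw [hGG x ⟨hmem.1, lt_of_le_of_ne hmem.2 hx⟩]
    rw [h5, hg']
  -- main bound on the integral
  have hIbound : ‖∫ t in Set.Icc α (α + δ), ((deriv h t : ℝ) : ℂ) * (t : ℂ) ^ s‖
      ≤ (1 - δ) ^ s.re := by
    rw [hIeq]
    calc ‖∫ t in Set.Icc α (α + δ), ((φ t : ℝ) : ℂ) * (t : ℂ) ^ s‖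
        ≤ ∫ t in Set.Icc α (α + δ), ‖((φ t : ℝ) : ℂ) * (t : ℂ) ^ s‖ :=
          norm_integral_le_integral_norm _
      _ = ∫ t in Set.Icc α (α + δ), |φ t| * t ^ s.re := by
          apply setIntegral_congr_fun measurableSet_Icc
          intro t ht
          exact habs_bound t ht
      _ ≤ ∫ t in Set.Icc α (α + δ), |φ t| * (1 - δ) ^ s.re := by
          apply setIntegral_mono_on
          · apply ContinuousOn.integrableOn_Icc
            apply (hφcont.abs).mul
            apply ContinuousOn.rpow_const continuousOn_id
            intro t ht
            exact Or.inl (ne_of_gt (lt_of_lt_of_le hαpos ht.1))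
          · exact ((hφcont.abs).mul continuousOn_const).integrableOn_Icc
          · exact measurableSet_Icc
          · intro t ht
            apply mul_le_mul_of_nonneg_left _ (abs_nonneg _)
            exact Real.rpow_le_rpow_of_nonpos h1δ (by linarith [ht.1, hαlb]) hs
      _ = (1 - δ) ^ s.re := by
          rw [integral_mul_const, hint_phi, one_mul]
  -- conclude
  rw [norm_mul, norm_neg, norm_div, norm_one]
  rw [div_mul_eq_mul_div, one_mul, div_le_div_iff_of_pos_right]
  · exact hIbound
  · exact norm_pos_iff.mpr hs0
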